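/- Let t_V, t_D ≥ 0 and let q_1, …, q_n ∈ [0,1] with q_1 ≤ q_2 ≤ … ≤ q_n. Then for every m ∈ {0, …, n} and every sequence (q_{i_1}, …, q_{i_m}) obtained from pairwise distinct indices i_1, …, i_m ∈ {1, …, n}, one has T(q_1, …, q_m) ≤ T(q_{i_1}, …, q_{i_m}); that is, the minimal expected episode duration over all choices of m distinct boxes and their order is attained by the m boxes of smallest rejection probability arranged in increasing order of rejection probability. -/

import Mathlib

/-- Expected episode duration: `expDur tV tD [q₁, …, qₘ]` is the expected annotation time of
the strategy `VᵐD` that verifies boxes with rejection probabilities `q₁, …, qₘ` in order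
(each verification taking time `tV`) and draws manually (taking time `tD`) if all are
rejected: `expDur tV tD [] = tD` and `expDur tV tD (q :: qs) = tV + q * expDur tV tD qs`. -/
noncomputable def expDur (tV tD : ℝ) : List ℝ → ℝ
  | [] => tD
  | q :: qs => tV + q * expDur tV tD qs

lemma expDur_nonneg (tV tD : ℝ) (htV : 0 ≤ tV) (htD : 0 ≤ tD) :
    ∀ l : List ℝ, (∀ x ∈ l, 0 ≤ x) → 0 ≤ expDur tV tD l
  | [], _ => htD
  | a :: l, h => by
    have h1 := expDur_nonneg tV tD htV htD l (fun x hx => h x (List.mem_cons_of_mem _ hx))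
    have h2 := h a List.mem_cons_self
    simpa [expDur] using add_nonneg htV (mul_nonneg h2 h1)

lemma expDur_forall₂ (tV tD : ℝ) (htV : 0 ≤ tV) (htD : 0 ≤ tD) :
    ∀ {l₁ l₂ : List ℝ}, List.Forall₂ (· ≤ ·) l₁ l₂ → (∀ x ∈ l₁, 0 ≤ x) → (∀ x ∈ l₂, 0 ≤ x) →
      expDur tV tD l₁ ≤ expDur tV tD l₂ := by
  intro l₁ l₂ h
  induction h with
  | nil => intro _ _; exact le_refl _
  | cons hab h ih =>
    rename_i a b l₁ l₂
    intro h1 h2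
    have ha := h1 a List.mem_cons_self
    have hE2 := expDur_nonneg tV tD htV htD l₂ (fun x hx => h2 x (List.mem_cons_of_mem _ hx))
    have key := ih (fun x hx => h1 x (List.mem_cons_of_mem _ hx))
      (fun x hx => h2 x (List.mem_cons_of_mem _ hx))
    simp only [expDur]
    have : a * expDur tV tD l₁ ≤ b * expDur tV tD l₂ := by nlinarith
    linarith

lemma expDur_orderedInsert_le (tV tD : ℝ) (htV : 0 ≤ tV) (htD : 0 ≤ tD) (a : ℝ) (ha : 0 ≤ a) :
    ∀ l : List ℝ, (∀ x ∈ l, 0 ≤ x) →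
      expDur tV tD (List.orderedInsert (· ≤ ·) a l) ≤ expDur tV tD (a :: l)
  | [], _ => le_refl _
  | b :: l, h => by
    have hb := h b List.mem_cons_self
    have hl : ∀ x ∈ l, 0 ≤ x := fun x hx => h x (List.mem_cons_of_mem _ hx)
    by_cases hab : a ≤ b
    · simp [List.orderedInsert, hab]
    · have ih := expDur_orderedInsert_le tV tD htV htD a ha l hl
      have hE := expDur_nonneg tV tD htV htD l hl
      simp only [List.orderedInsert, if_neg hab]
      simp only [expDur] at *
      push_neg at hab
      nlinarith

lemma expDur_insertionSort_le (tV tD : ℝ) (htV : 0 ≤ tV) (htD : 0 ≤ tD) :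
    ∀ l : List ℝ, (∀ x ∈ l, 0 ≤ x) →
      expDur tV tD (List.insertionSort (· ≤ ·) l) ≤ expDur tV tD l
  | [], _ => le_refl _
  | a :: l, h => by
    have ha := h a List.mem_cons_self
    have hl : ∀ x ∈ l, 0 ≤ x := fun x hx => h x (List.mem_cons_of_mem _ hx)
    have hsl : ∀ x ∈ List.insertionSort (· ≤ ·) l, 0 ≤ x := fun x hx =>
      hl x ((List.perm_insertionSort _ l).mem_iff.mp hx)
    have ih := expDur_insertionSort_le tV tD htV htD l hl
    calc expDur tV tD (List.insertionSort (· ≤ ·) (a :: l))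
        = expDur tV tD (List.orderedInsert (· ≤ ·) a (List.insertionSort (· ≤ ·) l)) := rfl
      _ ≤ expDur tV tD (a :: List.insertionSort (· ≤ ·) l) :=
          expDur_orderedInsert_le tV tD htV htD a ha _ hsl
      _ ≤ expDur tV tD (a :: l) := by
          simp only [expDur]
          nlinarith

lemma expDur_sorted_perm_le (tV tD : ℝ) (htV : 0 ≤ tV) (htD : 0 ≤ tD)
    (l l' : List ℝ) (h : ∀ x ∈ l, 0 ≤ x) (hp : l'.Perm l) (hs : l'.Pairwise (· ≤ ·)) :
    expDur tV tD l' ≤ expDur tV tD l := by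
  have : l' = List.insertionSort (· ≤ ·) l := by
    apply List.Perm.eq_of_pairwise' hs ?_ (hp.trans (List.perm_insertionSort _ l).symm)
    exact List.pairwise_insertionSort _ l
  rw [this]
  exact expDur_insertionSort_le tV tD htV htD l h

/-- If `q_0 ≤ q_1 ≤ … ≤ q_{n-1}`, then for every `m ≤ n` and every choice of `m` pairwise
distinct indices, the expected duration of verifying the `m` smallest rejection
probabilities in increasing order is at most that of the chosen sequence. -/
theorem expDur_prefix_min (tV tD : ℝ) (htV : 0 ≤ tV) (htD : 0 ≤ tD)
    (n : ℕ) (q : ℕ → ℝ)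
    (hq : ∀ i < n, 0 ≤ q i ∧ q i ≤ 1)
    (hsorted : ∀ i j, i ≤ j → j < n → q i ≤ q j)
    (m : ℕ) (hm : m ≤ n)
    (idx : Fin m → ℕ) (hinj : Function.Injective idx) (hidx : ∀ j, idx j < n) :
    expDur tV tD ((List.range m).map q)
      ≤ expDur tV tD (List.ofFn fun j => q (idx j)) := by
  classical
  set S : Finset ℕ := Finset.image idx Finset.univ with hS
  have hcard : S.card = m := by
    rw [hS, Finset.card_image_of_injective _ hinj, Finset.card_univ, Fintype.card_fin]
  set g : Fin m → ℕ := fun j => (S.orderIsoOfFin hcard j : ℕ) with hg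
  have hgmono : StrictMono g := fun i j hij => by
    simpa [hg] using (S.orderIsoOfFin hcard).strictMono hij
  have hgmem : ∀ j, g j ∈ S := fun j => (S.orderIsoOfFin hcard j).2
  have hgn : ∀ j, g j < n := by
    intro j
    obtain ⟨i, -, hi⟩ := Finset.mem_image.mp (hgmem j)
    rw [← hi]; exact hidx i
  -- j ≤ g j
  have hjle : ∀ j : Fin m, (j : ℕ) ≤ g j := by
    have key : ∀ k, ∀ j : Fin m, (j : ℕ) = k → k ≤ g j := by
      intro k
      induction k with
      | zero => intro j _; exact Nat.zero_le _
      | succ k ih =>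
        intro j hj
        have hkm : k < m := by omega
        have hlt : (⟨k, hkm⟩ : Fin m) < j := by simp [Fin.lt_def, hj]
        have h1 := hgmono hlt
        have h2 := ih ⟨k, hkm⟩ rfl
        omega
    exact fun j => key (j : ℕ) j rfl
  set L' : List ℝ := List.ofFn (fun j => q (g j)) with hL'
  have hperm : L'.Perm (List.ofFn fun j => q (idx j)) := by
    have h1 : L' = (List.ofFn g).map q := by simp [hL', List.map_ofFn, Function.comp_def]
    have h2 : (List.ofFn fun j => q (idx j)) = (List.ofFn idx).map q := by
      simp [List.map_ofFn, Function.comp_def]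
    rw [h1, h2]
    apply List.Perm.map
    apply List.perm_of_nodup_nodup_toFinset_eq
    · exact List.nodup_ofFn.mpr hgmono.injective
    · exact List.nodup_ofFn.mpr hinj
    · ext x
      simp only [List.mem_toFinset, List.mem_ofFn]
      constructor
      · rintro ⟨j, rfl⟩
        obtain ⟨i, -, hi⟩ := Finset.mem_image.mp (hgmem j)
        exact ⟨i, hi⟩
      · rintro ⟨j, rfl⟩
        have hx : idx j ∈ S := Finset.mem_image.mpr ⟨j, Finset.mem_univ _, rfl⟩
        obtain ⟨i, hi⟩ := (S.orderIsoOfFin hcard).surjective ⟨idx j, hx⟩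
        refine ⟨i, ?_⟩
        rw [hg]
        exact congrArg Subtype.val hi
  have hsortL' : L'.Pairwise (· ≤ ·) := by
    rw [hL', ← List.sortedLE_iff_pairwise, List.sortedLE_ofFn_iff]
    intro i j hij
    exact hsorted _ _ (hgmono.monotone hij) (hgn j)
  have hqnn : ∀ i < n, 0 ≤ q i := fun i hi => (hq i hi).1
  have hstep1 : expDur tV tD ((List.range m).map q) ≤ expDur tV tD L' := by
    apply expDur_forall₂ tV tD htV htD
    · rw [List.forall₂_iff_get]
      constructor
      · simp [hL']
      · intro i h₁ h₂
        simp only [List.length_map, List.length_range] at h₁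
        have : i < m := h₁
        simp only [hL', List.get_eq_getElem, List.getElem_map, List.getElem_range,
          List.getElem_ofFn]
        exact hsorted _ _ (hjle ⟨i, this⟩) (hgn _)
    · intro x hx
      obtain ⟨i, hi, rfl⟩ := List.mem_map.mp hx
      exact hqnn i (lt_of_lt_of_le (List.mem_range.mp hi) hm)
    · intro x hx
      rw [hL'] at hx
      obtain ⟨j, rfl⟩ := List.mem_ofFn.mp hx
      exact hqnn _ (hgn j)
  have hstep2 : expDur tV tD L' ≤ expDur tV tD (List.ofFn fun j => q (idx j)) := by
    apply expDur_sorted_perm_le tV tD htV htD _ _ _ hperm hsortL'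
    intro x hx
    obtain ⟨j, rfl⟩ := List.mem_ofFn.mp hx
    exact hqnn _ (hidx j)
  exact hstep1.trans hstep2
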